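/- Let H be a complex Hilbert space and let M, N be bounded skew-adjoint operators on H with [M,N] = MN − NM = λN for some real λ ≠ 0. If φ ∈ H satisfies exp(tM)φ = φ for all t ∈ ℝ, then exp(sN)φ = φ for all s ∈ ℝ. -/

import Mathlib

open NormedSpace ContinuousLinearMap

/-- Derivative of `t ↦ exp((t:ℂ) • A) x` as a real-variable function. -/
lemma exp_smul_apply_hasDerivAt
    {H : Type*} [NormedAddCommGroup H] [InnerProductSpace ℂ H] [CompleteSpace H]
    (A : H →L[ℂ] H) (x : H) (t : ℝ) :
    HasDerivAt (fun s : ℝ => exp ((s : ℂ) • A) x)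
      (exp ((t : ℂ) • A) (A x)) t := by
  have h1 : HasDerivAt (fun z : ℂ => exp (z • A))
      (exp ((t : ℂ) • A) * A) (t : ℂ) := hasDerivAt_exp_smul_const A (t : ℂ)
  have h2 : HasDerivAt (fun z : ℂ => (ContinuousLinearMap.apply ℂ H x) (exp (z • A)))
      ((ContinuousLinearMap.apply ℂ H x) (exp ((t : ℂ) • A) * A)) (t : ℂ) :=
    (ContinuousLinearMap.apply ℂ H x).hasFDerivAt.comp_hasDerivAt _ h1
  have h3 := HasDerivAt.scomp (𝕜 := ℝ) t h2 Complex.ofRealCLM.hasDerivAt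
  simpa [Function.comp_def] using h3

/-- Lemma 1(b), bounded-operator version: if `M, N` are bounded skew-adjoint operators
with `[M,N] = λN` for a real `λ ≠ 0`, and `φ` is invariant under `exp(tM)` for all real
`t`, then `φ` is invariant under `exp(sN)` for all real `s`. -/
theorem invariant_of_ad_eigenvector
    {H : Type*} [NormedAddCommGroup H] [InnerProductSpace ℂ H] [CompleteSpace H]
    (M N : H →L[ℂ] H) (hM : adjoint M = -M) (hN : adjoint N = -N)
    (l : ℝ) (hl : l ≠ 0) (hcomm : M * N - N * M = (l : ℂ) • N)
    (φ : H) (hφ : ∀ t : ℝ, exp ((t : ℂ) • M) φ = φ) :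
    ∀ s : ℝ, exp ((s : ℂ) • N) φ = φ := by
  -- Step 1: M φ = 0
  have hMφ : M φ = 0 := by
    have hd := exp_smul_apply_hasDerivAt M φ 0
    have hconst : HasDerivAt (fun s : ℝ => exp ((s : ℂ) • M) φ) 0 0 := by
      have he : (fun s : ℝ => exp ((s : ℂ) • M) φ) = fun _ => φ := funext hφ
      rw [he]; exact hasDerivAt_const 0 φ
    have := hd.unique hconst
    simpa [exp_zero] using this
  -- Step 2: M (N φ) = l • (N φ)
  have hMNφ : M (N φ) = (l : ℂ) • (N φ) := by
    have h := congrArg (fun T : H →L[ℂ] H => T φ) hcomm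
    simp only [sub_apply, ContinuousLinearMap.mul_apply, coe_smul', Pi.smul_apply] at h
    rw [hMφ] at h
    simpa using h
  -- Step 3: N φ = 0 (skew-adjoint operators have no nonzero real eigenvalue)
  have hNφ : N φ = 0 := by
    set v := N φ with hv
    have h1 : (inner ℂ (M v) v : ℂ) = (l : ℂ) * (‖v‖ : ℂ) ^ 2 := by
      rw [hMNφ, inner_smul_left, inner_self_eq_norm_sq_to_K]
      simp [Complex.conj_ofReal]
    have h2 : (inner ℂ (M v) v : ℂ) = -(starRingEnd ℂ (inner ℂ (M v) v : ℂ)) := by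
      calc (inner ℂ (M v) v : ℂ)
          = inner ℂ v (adjoint M v) := (ContinuousLinearMap.adjoint_inner_right M v v).symm
        _ = inner ℂ v (-(M v)) := by rw [hM]; simp
        _ = -(inner ℂ v (M v)) := by rw [inner_neg_right]
        _ = -(starRingEnd ℂ (inner ℂ (M v) v : ℂ)) := by rw [← inner_conj_symm]
    rw [h1] at h2
    have hconj : starRingEnd ℂ ((l : ℂ) * (‖v‖ : ℂ) ^ 2) = (l : ℂ) * (‖v‖ : ℂ) ^ 2 := by
      simp [map_mul, Complex.conj_ofReal]
    rw [hconj] at h2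
    have hx : (l : ℂ) * (‖v‖ : ℂ) ^ 2 = 0 := by linear_combination h2 / 2
    have hln : (l : ℂ) ≠ 0 := Complex.ofReal_ne_zero.mpr hl
    have hnorm : (‖v‖ : ℂ) ^ 2 = 0 := (mul_eq_zero.mp hx).resolve_left hln
    have : ‖v‖ = 0 := by
      have := pow_eq_zero_iff (n := 2) (by norm_num) |>.mp hnorm
      exact_mod_cast this
    exact norm_eq_zero.mp this
  -- Step 4: s ↦ exp(sN)φ is constant
  intro s
  have hdiff : ∀ t : ℝ, HasDerivAt (fun s : ℝ => exp ((s : ℂ) • N) φ) 0 t := by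
    intro t
    have := exp_smul_apply_hasDerivAt N φ t
    rw [hNφ] at this
    simpa using this
  have hconst := is_const_of_deriv_eq_zero (f := fun s : ℝ => exp ((s : ℂ) • N) φ)
    (fun t => (hdiff t).differentiableAt) (fun t => (hdiff t).deriv) s 0
  simpa [exp_zero] using hconst
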